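/- In the free algebra F with the Hopf pairing ⟨−,−⟩ determined by ⟨E_{i,l}, E_{i,l}⟩ = ν_{i,l} and the coproduct δ(E_{i,l}) = Σ_{t+t'=l} v_i^{tt'} E_{i,t}⊗E_{i,t'}, one has for any imaginary vertex i and any composition c = (c_1,…,c_r) with |c| = l: ⟨E_{i,l}, E_{i,c}⟩ = v_i^{Σ_{k<j} c_k c_j} · Π_j ν_{i,c_j}, where E_{i,c} = E_{i,c_1}⋯E_{i,c_r}. -/

import Mathlib

/- Setting for the generalized quantum group: `I` is the vertex set of a quiver with loops,
`ω i` the number of loops at `i` (`i` is real iff `ω i = 0`), `e` the symmetric Euler form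
with `e i i = 2 - 2 ω i`.  `I_∞ = (I^re × {1}) ∪ (I^im × ℕ_{≥1})` is the set of generators,
`F` is the free `ℚ(v)`-algebra on the generators `E_{i,l}` (`(i,l) ∈ I_∞`), realized as the
monoid algebra of the free monoid on `I_∞`.  `F ⊗ F` carries the twisted multiplication
`(a⊗b)(c⊗d) = v^{(|b|,|c|)} ac ⊗ bd`, and `δ : F → F ⊗ F` is the algebra morphism with
`δ(E_{i,l}) = Σ_{t+t'=l} v_i^{tt'} E_{i,t} ⊗ E_{i,t'}` (`v_i = v^{(i,i)/2} = v^{1-ω i}`). -/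

open scoped Classical

noncomputable section

/-- The base field `ℚ(v)`. -/
abbrev Kv : Type := RatFunc ℚ

/-- The variable `v`. -/
def vq : Kv := RatFunc.X

variable {I : Type} [DecidableEq I]

/-- The index set `I_∞`: pairs `(i,l)` with `l ≥ 1`, and `l = 1` if `i` is real. -/
def GenI (ω : I → ℕ) : Type := {p : I × ℕ // 1 ≤ p.2 ∧ (ω p.1 = 0 → p.2 = 1)}

/-- The free algebra `F` on the generators `E_ι`, `ι ∈ I_∞`, as a monoid algebra. -/
abbrev FA (ω : I → ℕ) : Type := MonoidAlgebra Kv (FreeMonoid (GenI ω))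

/-- The monomial of `F` attached to a word in the generators. -/
def sw (ω : I → ℕ) (w : List (GenI ω)) : FA ω :=
  MonoidAlgebra.single (FreeMonoid.ofList w) (1 : Kv)

/-- The weight (degree in `ℕI`) of a word. -/
def wtw (ω : I → ℕ) (w : List (GenI ω)) : I → ℕ := fun i =>
  ((w.filter (fun g => g.1.1 = i)).map (fun g => g.1.2)).sum

/-- `F ⊗ F` as a module: formal linear combinations of pairs of words. -/
abbrev TT (ω : I → ℕ) : Type := (List (GenI ω) × List (GenI ω)) →₀ Kv

/-- The Euler pairing `(|u|, |w|)` of the weights of two words. -/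
def eWt (ω : I → ℕ) (e : I → I → ℤ) (u w : List (GenI ω)) : ℤ :=
  (u.map (fun g => (w.map (fun g' => (g.1.2 : ℤ) * (g'.1.2 : ℤ) * e g.1.1 g'.1.1)).sum)).sum

/-- The twisted multiplication on `F ⊗ F`:
`(a⊗b)(c⊗d) = v^{(|b|,|c|)} ac ⊗ bd`. -/
def tmul (ω : I → ℕ) (e : I → I → ℤ) (f h : TT ω) : TT ω :=
  f.sum fun p a => h.sum fun q b =>
    Finsupp.single (p.1 ++ q.1, p.2 ++ q.2) (a * b * vq ^ (eWt ω e p.2 q.1))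

/-- The word representing `E_{i,t}` (empty if `t = 0`), built from a generator `g = (i,l)`
with `t ≤ l`. -/
def mkw (ω : I → ℕ) (g : GenI ω) (t : ℕ) (ht : t ≤ g.1.2) : List (GenI ω) :=
  if h1 : 1 ≤ t then
    [⟨(g.1.1, t), h1, fun h0 => le_antisymm (ht.trans_eq (g.2.2 h0)) h1⟩]
  else []

/-- `δ(E_{i,l}) = Σ_{t+t'=l} v_i^{t t'} E_{i,t} ⊗ E_{i,t'}`, with `v_i = v^{1-ω i}`. -/
def deltaGen (ω : I → ℕ) (g : GenI ω) : TT ω :=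
  ∑ t ∈ (Finset.range (g.1.2 + 1)).attach,
    (vq ^ ((1 - (ω g.1.1 : ℤ)) * (t.1 : ℤ) * ((g.1.2 : ℤ) - (t.1 : ℤ)))) •
      Finsupp.single
        (mkw ω g t.1 (Nat.le_of_lt_succ (Finset.mem_range.mp t.2)),
         mkw ω g (g.1.2 - t.1) (Nat.sub_le _ _)) (1 : Kv)

/-- `δ` on words: the product (in the twisted algebra `F ⊗ F`) of the `δ` of the letters. -/
def deltaWord (ω : I → ℕ) (e : I → I → ℤ) : List (GenI ω) → TT ω
  | [] => Finsupp.single ([], []) 1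
  | g :: w => tmul ω e (deltaGen ω g) (deltaWord ω e w)

/-- The comultiplication `δ : F → F ⊗ F` (linear extension). -/
def deltaF (ω : I → ℕ) (e : I → I → ℤ) (c : FA ω) : TT ω :=
  c.coeff.sum fun w a => a • deltaWord ω e (FreeMonoid.toList w)

/-- The axioms of the Hopf pairing `⟨-,-⟩` on `F` attached to the family `ν`:
`⟨1,1⟩ = 1`; `⟨x,y⟩ = 0` for homogeneous `x, y` of different weights; `⟨E_ι,E_ι⟩ = ν_ι`;
`⟨ab, c⟩ = ⟨a ⊗ b, δ(c)⟩` and `⟨a, bc⟩ = ⟨δ(a), b ⊗ c⟩`, where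
`⟨a⊗b, c⊗d⟩ = ⟨a,c⟩⟨b,d⟩`. -/
def PairingAxioms (ω : I → ℕ) (e : I → I → ℤ) (ν : GenI ω → Kv)
    (B : FA ω →ₗ[Kv] FA ω →ₗ[Kv] Kv) : Prop :=
  B 1 1 = 1 ∧
  (∀ w w' : List (GenI ω), wtw ω w ≠ wtw ω w' → B (sw ω w) (sw ω w') = 0) ∧
  (∀ g : GenI ω, B (sw ω [g]) (sw ω [g]) = ν g) ∧
  (∀ a b c : FA ω,
    B (a * b) c = (deltaF ω e c).sum fun p coeff =>
      coeff * B a (sw ω p.1) * B b (sw ω p.2)) ∧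
  (∀ a b c : FA ω,
    B a (b * c) = (deltaF ω e a).sum fun p coeff =>
      coeff * B (sw ω p.1) b * B (sw ω p.2) c)

end
noncomputable section
variable {I : Type} [DecidableEq I]

/-- The generator `E_{i,l}` for an imaginary vertex `i` (`ω i ≥ 1`). -/
def gIm (ω : I → ℕ) (i : I) (him : 1 ≤ ω i) (l : ℕ) (hl : 1 ≤ l) : GenI ω :=
  ⟨(i, l), hl, fun h0 => absurd (show ω i = 0 from h0) (by omega)⟩

/-- `E_{i,c} = E_{i,c_1} ⋯ E_{i,c_r}` for a composition `c`. -/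
def Ecomp (ω : I → ℕ) (i : I) (him : 1 ≤ ω i) (c : List ℕ) (hc : ∀ k ∈ c, 1 ≤ k) :
    FA ω :=
  (c.attach.map fun j => sw ω [gIm ω i him j.1 (hc j.1 j.2)]).prod

/-- `Σ_{k<j} c_k c_j` for a composition `c`. -/
def crossSum (c : List ℕ) : ℕ :=
  ∑ j ∈ Finset.range c.length, ∑ k ∈ Finset.range j, (c.getD k 0) * (c.getD j 0)

/-! ### Auxiliary lemmas -/

/-- The word `E_{i,t}` (empty if `t = 0`) for an imaginary vertex, proof-free version. -/
def mkw' (ω : I → ℕ) (i : I) (him : 1 ≤ ω i) (t : ℕ) : List (GenI ω) :=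
  if h : 1 ≤ t then [gIm ω i him t h] else []

lemma mkw_gIm (ω : I → ℕ) (i : I) (him : 1 ≤ ω i) (l : ℕ) (hl : 1 ≤ l)
    (t : ℕ) (ht : t ≤ (gIm ω i him l hl).1.2) :
    mkw ω (gIm ω i him l hl) t ht = mkw' ω i him t := by
  by_cases h : 1 ≤ t <;> simp [mkw, mkw', gIm, h]

lemma sw_nil (ω : I → ℕ) : sw ω ([] : List (GenI ω)) = 1 := rfl

lemma sw_cons (ω : I → ℕ) (g : GenI ω) (w : List (GenI ω)) :
    sw ω (g :: w) = sw ω [g] * sw ω w := by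
  simp only [sw, MonoidAlgebra.single_mul_single, one_mul]
  rfl

lemma prod_sw (ω : I → ℕ) (L : List (GenI ω)) :
    (L.map fun g => sw ω [g]).prod = sw ω L := by
  induction L with
  | nil => simp [sw_nil]
  | cons g L ih =>
    rw [List.map_cons, List.prod_cons, ih]
    exact (sw_cons ω g L).symm

lemma eWt_nil_right (ω : I → ℕ) (e : I → I → ℤ) (u : List (GenI ω)) :
    eWt ω e u [] = 0 := by
  simp [eWt]

lemma tmul_single_nil (ω : I → ℕ) (e : I → I → ℤ) (f : TT ω) :
    tmul ω e f (Finsupp.single ([], []) 1) = f := by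
  unfold tmul
  refine (Finsupp.sum_congr fun p _ => ?_).trans (Finsupp.sum_single f)
  rw [Finsupp.sum_single_index (by simp)]
  simp [eWt_nil_right]

lemma deltaF_gen (ω : I → ℕ) (e : I → I → ℤ) (g : GenI ω) :
    deltaF ω e (sw ω [g]) = deltaGen ω g := by
  unfold deltaF sw
  rw [MonoidAlgebra.coeff_single, Finsupp.sum_single_index (by simp)]
  simp only [one_smul]
  show deltaWord ω e [g] = deltaGen ω g
  rw [deltaWord, deltaWord, tmul_single_nil]

lemma deltaGen_gIm (ω : I → ℕ) (i : I) (him : 1 ≤ ω i) (l : ℕ) (hl1 : 1 ≤ l) :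
    deltaGen ω (gIm ω i him l hl1) =
    ∑ t ∈ (Finset.range (l + 1)).attach,
      (vq ^ ((1 - (ω i : ℤ)) * (t.1 : ℤ) * ((l : ℤ) - (t.1 : ℤ)))) •
        Finsupp.single (mkw' ω i him t.1, mkw' ω i him (l - t.1)) (1 : Kv) := by
  unfold deltaGen
  refine Finset.sum_congr rfl fun t ht => ?_
  rw [mkw_gIm, mkw_gIm]
  rfl

lemma wtw_mkw' (ω : I → ℕ) (i : I) (him : 1 ≤ ω i) (t : ℕ) :
    wtw ω (mkw' ω i him t) i = t := by
  by_cases h : 1 ≤ t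
  · rw [mkw', dif_pos h]
    unfold wtw
    rw [List.filter_cons_of_pos (by simp [gIm])]
    rfl
  · simp [mkw', wtw, h]
    omega

lemma wtw_gIm (ω : I → ℕ) (i : I) (him : 1 ≤ ω i) (t : ℕ) (ht : 1 ≤ t) :
    wtw ω [gIm ω i him t ht] i = t := by
  unfold wtw
  rw [List.filter_cons_of_pos (by simp [gIm])]
  rfl

lemma sum_getD (c : List ℕ) : ∑ j ∈ Finset.range c.length, c.getD j 0 = c.sum := by
  induction c with
  | nil => simp
  | cons a c ih =>
    rw [List.length_cons, Finset.sum_range_succ']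
    simp only [List.getD_cons_succ, List.getD_cons_zero, ih, List.sum_cons]
    omega

lemma crossSum_cons (a : ℕ) (c : List ℕ) :
    crossSum (a :: c) = a * c.sum + crossSum c := by
  unfold crossSum
  rw [List.length_cons, Finset.sum_range_succ']
  simp only [Finset.range_zero, Finset.sum_empty, add_zero]
  rw [Finset.sum_congr rfl fun j _ => Finset.sum_range_succ' _ j]
  simp only [List.getD_cons_succ, List.getD_cons_zero, Finset.sum_add_distrib]
  rw [← Finset.mul_sum, sum_getD]
  ring

lemma vq_ne_zero : vq ≠ 0 := RatFunc.X_ne_zero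

/-- The key computation, by induction on the composition `c` (allowing `c = []`). -/
lemma pairing_key (ω : I → ℕ) (e : I → I → ℤ) (ν : GenI ω → Kv)
    (B : FA ω →ₗ[Kv] FA ω →ₗ[Kv] Kv) (hB : PairingAxioms ω e ν B)
    (i : I) (him : 1 ≤ ω i) :
    ∀ (c : List ℕ) (hc : ∀ k ∈ c, 1 ≤ k),
      B (sw ω (mkw' ω i him c.sum))
        (sw ω (c.attach.map fun j => gIm ω i him j.1 (hc j.1 j.2))) =
      vq ^ ((1 - (ω i : ℤ)) * (crossSum c : ℤ)) *
        (c.attach.map fun j => ν (gIm ω i him j.1 (hc j.1 j.2))).prod := by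
  intro c
  induction c with
  | nil =>
    intro hc
    simp only [List.sum_nil, List.attach_nil, List.map_nil, List.prod_nil, crossSum,
      List.length_nil, Finset.range_zero, Finset.sum_empty, Nat.cast_zero, mul_zero,
      zpow_zero, mul_one]
    show B (sw ω (mkw' ω i him 0)) (sw ω []) = 1
    rw [show mkw' ω i him 0 = [] by simp [mkw'], sw_nil]
    exact hB.1
  | cons c1 rest ih =>
    intro hc
    have hc1 : 1 ≤ c1 := hc c1 List.mem_cons_self
    have hrest : ∀ k ∈ rest, 1 ≤ k := fun k hk => hc k (List.mem_cons_of_mem _ hk)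
    set l : ℕ := (c1 :: rest).sum with hl
    have hlsum : l = c1 + rest.sum := by simp [hl]
    have hl1 : 1 ≤ l := by omega
    -- rewrite the word as a product
    have hword : (c1 :: rest).attach.map (fun j => gIm ω i him j.1 (hc j.1 j.2)) =
        gIm ω i him c1 hc1 :: rest.attach.map (fun j => gIm ω i him j.1 (hrest j.1 j.2)) := by
      simp [List.attach_cons, List.map_map, Function.comp]
    rw [hword, sw_cons]
    -- the left side generator
    have hmk : mkw' ω i him l = [gIm ω i him l hl1] := by simp [mkw', hl1]
    rw [hmk]
    -- apply the pairing axiom ⟨a, bc⟩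
    rw [hB.2.2.2.2]
    rw [deltaF_gen, deltaGen_gIm]
    rw [← Finsupp.sum_finsetSum_index (h := fun (p : List (GenI ω) × List (GenI ω)) (coeff : Kv) => coeff * B (sw ω p.1) (sw ω [gIm ω i him c1 hc1]) *
      B (sw ω p.2) (sw ω (rest.attach.map fun j => gIm ω i him j.1 (hrest j.1 j.2))))
      (by intro p; simp) (by intro p x y; ring)]
    have hstep : ∀ p : (List (GenI ω) × List (GenI ω)), ∀ coef : Kv,
        (coef • (Finsupp.single p (1 : Kv))).sum
          (fun p coeff => coeff * B (sw ω p.1) (sw ω [gIm ω i him c1 hc1]) *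
            B (sw ω p.2) (sw ω (rest.attach.map fun j => gIm ω i him j.1 (hrest j.1 j.2)))) =
          coef * B (sw ω p.1) (sw ω [gIm ω i him c1 hc1]) *
            B (sw ω p.2) (sw ω (rest.attach.map fun j => gIm ω i him j.1 (hrest j.1 j.2))) := by
      intro p coef
      rw [Finsupp.smul_single, smul_eq_mul, mul_one, Finsupp.sum_single_index (by simp)]
    simp only [hstep]
    rw [Finset.sum_attach (Finset.range (l + 1)) (fun t =>
      vq ^ ((1 - (ω i : ℤ)) * (t : ℤ) * ((l : ℤ) - (t : ℤ))) *
        B (sw ω (mkw' ω i him t)) (sw ω [gIm ω i him c1 hc1]) *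
        B (sw ω (mkw' ω i him (l - t)))
          (sw ω (rest.attach.map fun j => gIm ω i him j.1 (hrest j.1 j.2))))]
    rw [Finset.sum_eq_single_of_mem c1 (Finset.mem_range.mpr (by omega))
      (fun t _ hne => by
        have hz : B (sw ω (mkw' ω i him t)) (sw ω [gIm ω i him c1 hc1]) = 0 := by
          apply hB.2.1
          intro hw
          apply hne
          have := congrFun hw i
          rwa [wtw_mkw', wtw_gIm] at this
        rw [hz, mul_zero, zero_mul])]
    have hmk1 : mkw' ω i him c1 = [gIm ω i him c1 hc1] := by simp [mkw', hc1]
    rw [hmk1, hB.2.2.1]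
    have hsub : l - c1 = rest.sum := by omega
    rw [hsub, ih hrest]
    rw [crossSum_cons]
    have hcast : ((l : ℤ) - (c1 : ℤ)) = (rest.sum : ℤ) := by omega
    rw [hcast]
    rw [show ((c1 * rest.sum + crossSum rest : ℕ) : ℤ) =
      (c1 : ℤ) * (rest.sum : ℤ) + (crossSum rest : ℤ) by push_cast; ring]
    rw [mul_add, zpow_add₀ vq_ne_zero]
    have hprod : (List.map (fun j => ν (gIm ω i him j.1 (hc j.1 j.2))) (c1 :: rest).attach).prod
        = ν (gIm ω i him c1 hc1) *
          (List.map (fun j => ν (gIm ω i him j.1 (hrest j.1 j.2))) rest.attach).prod := by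
      rw [List.attach_cons, List.map_cons, List.prod_cons, List.map_map]
      rfl
    rw [hprod]
    ring

/-- `⟨E_{i,|c|}, E_{i,c}⟩ = v_i^{Σ_{k<j} c_k c_j} Π_j ν_{i,c_j}`
for an imaginary vertex `i` and a composition `c` (here `v_i = v^{1-ω i}`). -/
theorem pairing_gen_comp {I : Type} [DecidableEq I]
    (ω : I → ℕ) (e : I → I → ℤ) (hsym : ∀ i j, e i j = e j i)
    (hii : ∀ i, e i i = 2 - 2 * (ω i : ℤ))
    (ν : GenI ω → Kv) (B : FA ω →ₗ[Kv] FA ω →ₗ[Kv] Kv)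
    (hB : PairingAxioms ω e ν B)
    (i : I) (him : 1 ≤ ω i) (c : List ℕ) (hc : ∀ k ∈ c, 1 ≤ k) (hsum : 1 ≤ c.sum) :
    B (sw ω [gIm ω i him c.sum hsum]) (Ecomp ω i him c hc) =
      vq ^ ((1 - (ω i : ℤ)) * (crossSum c : ℤ)) *
        (c.attach.map fun j => ν (gIm ω i him j.1 (hc j.1 j.2))).prod := by
  have hE : Ecomp ω i him c hc = sw ω (c.attach.map fun j => gIm ω i him j.1 (hc j.1 j.2)) := by
    rw [Ecomp, show (c.attach.map fun j => sw ω [gIm ω i him j.1 (hc j.1 j.2)]) =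
      (c.attach.map fun j => gIm ω i him j.1 (hc j.1 j.2)).map (fun g => sw ω [g]) by
        rw [List.map_map]; rfl]
    exact prod_sw ω _
  rw [hE, show [gIm ω i him c.sum hsum] = mkw' ω i him c.sum by simp [mkw', hsum]]
  exact pairing_key ω e ν B hB i him c hc
end
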